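/- Let c = R(τ₁)⋯R(τ_n) with ℓ(c) = n in a finite real reflection group of rank n, all τ_j unit roots, and let μ = 2(I−c)⁻¹. Fix i and set ε_i = R(τ₁)⋯R(τ_{i−1})(τ_i). Then μ(ε_i)·τ_j = 0 for all j ≠ i and μ(ε_i)·τ_i = 1. -/

import Mathlib

open scoped RealInnerProductSpace

noncomputable section

lemma moveLemma15 {n : ℕ} (V : Submodule ℝ (EuclideanSpace ℝ (Fin n)))
    (L : List (EuclideanSpace ℝ (Fin n) ≃ₗᵢ[ℝ] EuclideanSpace ℝ (Fin n)))
    (hL : ∀ g ∈ L, ∀ y, g y - y ∈ V) (x : EuclideanSpace ℝ (Fin n)) :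
    L.prod x - x ∈ V := by
  induction L with
  | nil => simp
  | cons g L ih =>
    have h1 : g (L.prod x) - L.prod x ∈ V := hL g (by simp) _
    have h2 : L.prod x - x ∈ V := ih (fun g' hg' => hL g' (by simp [hg']))
    have h3 := V.add_mem h1 h2
    rw [List.prod_cons]
    simpa [LinearIsometryEquiv.coe_mul, sub_add_sub_cancel] using h3

lemma memTake15 {n : ℕ} (r : Fin n → (EuclideanSpace ℝ (Fin n) ≃ₗᵢ[ℝ] EuclideanSpace ℝ (Fin n)))
    (k : ℕ) (g : EuclideanSpace ℝ (Fin n) ≃ₗᵢ[ℝ] EuclideanSpace ℝ (Fin n))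
    (hg : g ∈ (List.ofFn r).take k) : ∃ j : Fin n, j.val < k ∧ g = r j := by
  obtain ⟨m, hm, hget⟩ := List.mem_iff_getElem.1 hg
  rw [List.getElem_take, List.getElem_ofFn] at hget
  simp only [List.length_take, List.length_ofFn, lt_min_iff] at hm
  exact ⟨⟨m, hm.2⟩, hm.1, hget.symm⟩

lemma memDrop15 {n : ℕ} (r : Fin n → (EuclideanSpace ℝ (Fin n) ≃ₗᵢ[ℝ] EuclideanSpace ℝ (Fin n)))
    (k : ℕ) (g : EuclideanSpace ℝ (Fin n) ≃ₗᵢ[ℝ] EuclideanSpace ℝ (Fin n))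
    (hg : g ∈ (List.ofFn r).drop k) : ∃ j : Fin n, k ≤ j.val ∧ g = r j := by
  obtain ⟨m, hm, hget⟩ := List.mem_iff_getElem.1 hg
  rw [List.getElem_drop] at hget
  simp only [List.length_drop, List.length_ofFn] at hm
  rw [List.getElem_ofFn] at hget
  exact ⟨⟨k + m, by omega⟩, by simp, hget.symm⟩


/-- `g` is an orthogonal reflection in the hyperplane `τ^⊥` for some unit vector `τ`. -/
def IsReflection {n : ℕ}
    (g : EuclideanSpace ℝ (Fin n) ≃ₗᵢ[ℝ] EuclideanSpace ℝ (Fin n)) : Prop :=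
  ∃ τ : EuclideanSpace ℝ (Fin n), ‖τ‖ = 1 ∧ ∀ x, g x = x - (2 * ⟪x, τ⟫) • τ

/-- Absolute reflection length: the minimal number of reflections of `W`
whose product is `w`. -/
def rlen {n : ℕ}
    (W : Subgroup (EuclideanSpace ℝ (Fin n) ≃ₗᵢ[ℝ] EuclideanSpace ℝ (Fin n)))
    (w : EuclideanSpace ℝ (Fin n) ≃ₗᵢ[ℝ] EuclideanSpace ℝ (Fin n)) : ℕ :=
  sInf {k | ∃ L : List (EuclideanSpace ℝ (Fin n) ≃ₗᵢ[ℝ] EuclideanSpace ℝ (Fin n)),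
    (∀ r ∈ L, r ∈ W ∧ IsReflection r) ∧ L.length = k ∧ L.prod = w}

/-- The moved space `M(w) = im (I - w)`, the orthogonal complement of the
fixed subspace of `w`. -/
def mov {n : ℕ} (w : EuclideanSpace ℝ (Fin n) ≃ₗᵢ[ℝ] EuclideanSpace ℝ (Fin n)) :
    Submodule ℝ (EuclideanSpace ℝ (Fin n)) :=
  LinearMap.range ((LinearMap.id : _ →ₗ[ℝ] _) -
    (w.toLinearEquiv : EuclideanSpace ℝ (Fin n) →ₗ[ℝ] EuclideanSpace ℝ (Fin n)))

/-- The absolute order: `u ⪯ w` iff `ℓ(u) + ℓ(u⁻¹ w) = ℓ(w)`. -/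
def absLe {n : ℕ}
    (W : Subgroup (EuclideanSpace ℝ (Fin n) ≃ₗᵢ[ℝ] EuclideanSpace ℝ (Fin n)))
    (u w : EuclideanSpace ℝ (Fin n) ≃ₗᵢ[ℝ] EuclideanSpace ℝ (Fin n)) : Prop :=
  rlen W u + rlen W (u⁻¹ * w) = rlen W w

/-- Let `c = R(τ₁)⋯R(τ_n)` with `ℓ(c) = n` in a finite real reflection group of
rank `n`, all `τ_j` unit roots, and let `μ = 2(I - c)⁻¹`.  Fix `i` and set
`ε_i = R(τ₁)⋯R(τ_{i-1})(τ_i)`.  Then `μ(ε_i)·τ_j = 0` for `j ≠ i` and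
`μ(ε_i)·τ_i = 1`. -/
theorem stmt_15 {n : ℕ}
    (W : Subgroup (EuclideanSpace ℝ (Fin n) ≃ₗᵢ[ℝ] EuclideanSpace ℝ (Fin n)))
    (hfin : Finite W)
    (hgen : ∀ w ∈ W, ∃ L : List (EuclideanSpace ℝ (Fin n) ≃ₗᵢ[ℝ] EuclideanSpace ℝ (Fin n)),
      (∀ r ∈ L, r ∈ W ∧ IsReflection r) ∧ L.prod = w)
    (τ : Fin n → EuclideanSpace ℝ (Fin n)) (hτ : ∀ i, ‖τ i‖ = 1)
    (r : Fin n → (EuclideanSpace ℝ (Fin n) ≃ₗᵢ[ℝ] EuclideanSpace ℝ (Fin n)))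
    (hrW : ∀ i, r i ∈ W)
    (hr : ∀ i x, r i x = x - (2 * ⟪x, τ i⟫) • τ i)
    (c : EuclideanSpace ℝ (Fin n) ≃ₗᵢ[ℝ] EuclideanSpace ℝ (Fin n))
    (hfact : c = (List.ofFn r).prod)
    (hlen : rlen W c = n)
    (μ : EuclideanSpace ℝ (Fin n) →ₗ[ℝ] EuclideanSpace ℝ (Fin n))
    (hμ₁ : ∀ x, μ x - c (μ x) = (2 : ℝ) • x)
    (hμ₂ : ∀ x, μ (x - c x) = (2 : ℝ) • x)
    (i : Fin n) (ε : EuclideanSpace ℝ (Fin n))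
    (hε : ε = ((List.ofFn r).take i.val).prod (τ i)) :
    (∀ j, j ≠ i → ⟪μ ε, τ j⟫ = 0) ∧ ⟪μ ε, τ i⟫ = 1 := by
  classical
  have hττ : ∀ j, ⟪τ j, τ j⟫ = 1 := fun j => by
    rw [real_inner_self_eq_norm_mul_norm, hτ, one_mul]
  set p := ((List.ofFn r).take i.val).prod with hp
  set q := ((List.ofFn r).drop (i.val + 1)).prod with hq
  -- split c = p * (r i * q)
  have hsplit : c = p * (r i * q) := by
    have hlen : (i : ℕ) < (List.ofFn r).length := by simp [i.isLt]
    have hdrop : (List.ofFn r).drop i.val = r i :: (List.ofFn r).drop (i.val + 1) := by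
      rw [List.drop_eq_getElem_cons hlen, List.getElem_ofFn]
    calc c = ((List.ofFn r).take i.val ++ (List.ofFn r).drop i.val).prod := by
            rw [List.take_append_drop]; exact hfact
      _ = p * (r i * q) := by rw [hdrop, List.prod_append, List.prod_cons]
  set m := μ ε with hm
  have hcm : c m = m - (2 : ℝ) • ε := by
    have := hμ₁ ε
    rw [← hm] at this
    linear_combination (norm := module) -this
  have hεp : ε = p (τ i) := hε
  have hε1 : ⟪ε, ε⟫ = 1 := by
    rw [real_inner_self_eq_norm_mul_norm, hεp, LinearIsometryEquiv.norm_map, hτ, one_mul]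
  set y := q m with hy
  have hcy : c m = p ((r i) y) := by
    rw [hsplit]; rfl
  have hriy : (r i) y = y - (2 * ⟪y, τ i⟫) • τ i := hr i y
  -- inner product identity: ⟪y, τ i⟫ = 2 - ⟪m, ε⟫
  have hyτ : ⟪y, τ i⟫ = 2 - ⟪m, ε⟫ := by
    have h1 : ⟪p ((r i) y), ε⟫ = -⟪y, τ i⟫ := by
      rw [hεp, LinearIsometryEquiv.inner_map_map, hriy, inner_sub_left,
        real_inner_smul_left, hττ]
      ring
    have h2 : ⟪p ((r i) y), ε⟫ = ⟪m, ε⟫ - 2 := by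
      rw [← hcy, hcm, inner_sub_left, real_inner_smul_left, hε1]
      ring
    linarith [h1.symm.trans h2]
  have hkey : (p * q) m = m + ((2 : ℝ) - 2 * ⟪m, ε⟫) • ε := by
    have hpq : (p * q) m = p y := rfl
    have h4 : p ((r i) y) = p y - (2 * ⟪y, τ i⟫) • ε := by
      rw [hriy, hεp, map_sub, LinearIsometryEquiv.map_smul]
    have h5 : p y - (2 * ⟪y, τ i⟫) • ε = m - (2:ℝ) • ε := by rw [← h4, ← hcy, hcm]
    rw [hyτ] at h5
    rw [hpq]
    linear_combination (norm := module) h5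
  -- V = span of the other roots
  set V := Submodule.span ℝ (τ '' {i}ᶜ) with hV
  have hmove : ∀ (j : Fin n) (U : Submodule ℝ (EuclideanSpace ℝ (Fin n))), τ j ∈ U →
      ∀ z, r j z - z ∈ U := by
    intro j U hj z
    have he : r j z - z = (-(2 * ⟪z, τ j⟫)) • τ j := by rw [hr]; module
    rw [he]; exact U.smul_mem _ hj
  -- all of space is spanned by the τ's
  have hspan : ∀ x : EuclideanSpace ℝ (Fin n), x ∈ Submodule.span ℝ (Set.range τ) := by
    intro x
    have h1 : c (μ x) - μ x ∈ Submodule.span ℝ (Set.range τ) := by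
      rw [hfact]
      refine moveLemma15 _ _ (fun g hg z => ?_) _
      obtain ⟨j, hj⟩ := List.mem_ofFn.1 hg
      rw [← hj]
      exact hmove j _ (Submodule.subset_span (Set.mem_range_self j)) z
    have h1' : μ x - c (μ x) ∈ Submodule.span ℝ (Set.range τ) := by
      have := Submodule.neg_mem _ h1; simpa using this
    have h8 : x = (2:ℝ)⁻¹ • (μ x - c (μ x)) := by rw [hμ₁ x, smul_smul]; norm_num
    rw [h8]; exact Submodule.smul_mem _ _ h1'
  have hindep : LinearIndependent ℝ τ :=
    linearIndependent_of_top_le_span_of_card_eq_finrank (fun x _ => hspan x)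
      (by simp [finrank_euclideanSpace_fin])
  have hτiV : τ i ∉ V := hindep.notMem_span_image (by simp)
  have hτ_memV : ∀ j, j ≠ i → τ j ∈ V := fun j hj =>
    Submodule.subset_span ⟨j, by simp [hj], rfl⟩
  have hεsub : ε - τ i ∈ V := by
    rw [hεp]
    refine moveLemma15 V _ (fun g hg z => ?_) _
    obtain ⟨j, hji, rfl⟩ := memTake15 r _ g hg
    exact hmove j V (hτ_memV j (Fin.ne_of_val_ne (by omega))) z
  have hpq_move : ∀ g ∈ ((List.ofFn r).take i.val ++ (List.ofFn r).drop (i.val+1)),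
      ∀ z, g z - z ∈ V := by
    intro g hg z
    rcases List.mem_append.1 hg with h | h
    · obtain ⟨j, hji, rfl⟩ := memTake15 r _ g h
      exact hmove j V (hτ_memV j (Fin.ne_of_val_ne (by omega))) z
    · obtain ⟨j, hji, rfl⟩ := memDrop15 r _ g h
      exact hmove j V (hτ_memV j (Fin.ne_of_val_ne (by omega))) z
  set w := p * q with hw
  have hwmove : ∀ x, w x - x ∈ V := by
    intro x
    have hwl : w = (((List.ofFn r).take i.val ++ (List.ofFn r).drop (i.val+1))).prod := by
      rw [List.prod_append]
    rw [hwl]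
    exact moveLemma15 V _ hpq_move x
  -- ⟪m, ε⟫ = 1
  have hinner1 : ⟪m, ε⟫ = 1 := by
    by_contra hne
    have h6 : ((2:ℝ) - 2*⟪m,ε⟫) • ε ∈ V := by
      have he : w m - m = ((2:ℝ)-2*⟪m,ε⟫)•ε := by rw [hkey]; abel
      rw [← he]; exact hwmove m
    have hcoef : (2:ℝ) - 2*⟪m,ε⟫ ≠ 0 := by intro h; apply hne; linarith
    have hεV : ε ∈ V := by
      have := V.smul_mem ((2 - 2*⟪m,ε⟫)⁻¹) h6
      rwa [smul_smul, inv_mul_cancel₀ hcoef, one_smul] at this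
    refine hτiV ?_
    have he2 : τ i = ε - (ε - τ i) := by abel
    rw [he2]; exact V.sub_mem hεV hεsub
  have hfix : w m = m := by rw [hkey, hinner1]; norm_num
  -- M = span of moved vectors of w
  set M := Submodule.span ℝ (Set.range (fun x : EuclideanSpace ℝ (Fin n) => x - w x)) with hM
  have hMV : M ≤ V := by
    rw [hM, Submodule.span_le]
    rintro _ ⟨x, rfl⟩
    simpa using V.neg_mem (hwmove x)
  have hperp : ∀ v ∈ M, ⟪m, v⟫ = 0 := by
    intro v hv
    induction hv using Submodule.span_induction with
    | mem x hx =>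
      obtain ⟨z, rfl⟩ := hx
      have hz : ⟪m, w z⟫ = ⟪m, z⟫ := by
        conv_lhs => rw [← hfix]
        exact LinearIsometryEquiv.inner_map_map w m z
      rw [inner_sub_right, hz]; ring
    | zero => simp
    | add x y _ _ hx hy => rw [inner_add_right, hx, hy]; ring
    | smul a x _ hx => rw [real_inner_smul_right, hx]; ring
  -- ⊤ ≤ M ⊔ span ε
  have hcw : ∀ z, c z = w z - (2*⟪q z, τ i⟫) • ε := by
    intro z
    have h0 : c z = p ((r i) (q z)) := by rw [hsplit]; rfl
    rw [h0, hr i (q z), map_sub, LinearIsometryEquiv.map_smul, ← hεp]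
    rfl
  have hMsup : M ⊔ Submodule.span ℝ {ε} = ⊤ := by
    refine eq_top_iff.2 (fun x _ => ?_)
    have h7 : μ x - c (μ x) ∈ M ⊔ Submodule.span ℝ {ε} := by
      rw [hcw (μ x)]
      have e : μ x - (w (μ x) - (2*⟪q (μ x), τ i⟫) • ε)
          = (μ x - w (μ x)) + (2*⟪q (μ x), τ i⟫) • ε := by abel
      rw [e]
      exact Submodule.add_mem _
        (Submodule.mem_sup_left (Submodule.subset_span ⟨μ x, rfl⟩))
        (Submodule.mem_sup_right (Submodule.smul_mem _ _ (Submodule.mem_span_singleton_self ε)))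
    have h8 : x = (2:ℝ)⁻¹ • (μ x - c (μ x)) := by rw [hμ₁ x, smul_smul]; norm_num
    rw [h8]; exact Submodule.smul_mem _ _ h7
  have hεne : ε ≠ 0 := by intro h; rw [h] at hε1; simp at hε1
  have hrank1 : Module.finrank ℝ (Submodule.span ℝ {ε}) = 1 := finrank_span_singleton hεne
  have hVlt : Module.finrank ℝ V < n := by
    have hVne : V ≠ ⊤ := fun h => hτiV (h ▸ Submodule.mem_top)
    have := Submodule.finrank_lt (K := ℝ) hVne
    rwa [finrank_euclideanSpace_fin] at this
  have hMge : n ≤ Module.finrank ℝ M + 1 := by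
    have h9 := Submodule.finrank_sup_add_finrank_inf_eq M (Submodule.span ℝ {ε})
    rw [hMsup, hrank1] at h9
    have h10 : Module.finrank ℝ (⊤ : Submodule ℝ (EuclideanSpace ℝ (Fin n))) = n := by
      rw [finrank_top, finrank_euclideanSpace_fin]
    omega
  have hMle : Module.finrank ℝ M ≤ Module.finrank ℝ V := Submodule.finrank_mono hMV
  have hMV_eq : M = V := Submodule.eq_of_le_of_finrank_le hMV (by omega)
  constructor
  · intro j hj
    exact hperp (τ j) (hMV_eq ▸ hτ_memV j hj)
  · have h10 : ⟪m, ε - τ i⟫ = 0 := hperp _ (hMV_eq ▸ hεsub)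
    rw [inner_sub_right] at h10
    have := hinner1
    linarith
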